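/- Define T: (0,∞) → ℝ by T(z) = 1 − 2z (1 − e^{−1/(2z)}). Then: (a) T is twice differentiable and satisfies 2 z² T''(z) + (2z − 1) T'(z) − 2 T(z) = 0 for all z > 0; (b) lim_{z↓0} T(z) = 1 and lim_{z→∞} T(z) = 0; (c) −T'(z) = 2 − (1/z + 2) e^{−1/(2z)} for all z > 0; (d) every twice differentiable function h: (0,∞) → ℝ satisfying 2 z² h''(z) + (2z − 1) h'(z) − 2 h(z) = 0 for all z > 0 is of the form h(z) = c₁ z e^{−1/(2z)} + c₂ (2z − 1) for some constants c₁, c₂ ∈ ℝ. -/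

import Mathlib

open MeasureTheory Set Filter

noncomputable section

/-- the tail function of the killed exponential functional with
`q = 2`, `σξ² = 4`, `γη⁰ = 1`, `ση² = γξ⁰ = 0`. -/
def Ttail (z : ℝ) : ℝ := 1 - 2 * z * (1 - Real.exp (-(1 / (2 * z))))

lemma const_on_Ioi {f : ℝ → ℝ} (hf : ∀ z : ℝ, 0 < z → HasDerivAt f 0 z)
    {x y : ℝ} (hx : 0 < x) (hy : 0 < y) : f x = f y := by
  have hc : ContinuousOn f (Ioi (0:ℝ)) := fun z hz =>
    ((hf z hz).differentiableAt).continuousAt.continuousWithinAt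
  have hd : DifferentiableOn ℝ f (interior (Ioi (0:ℝ))) := by
    rw [interior_Ioi]
    exact fun z hz => ((hf z hz).differentiableAt).differentiableWithinAt
  have h0 : ∀ w ∈ interior (Ioi (0:ℝ)), deriv f w = 0 := by
    rw [interior_Ioi]; exact fun w hw => (hf w hw).deriv
  have hm := monotoneOn_of_deriv_nonneg (convex_Ioi 0) hc hd
    (fun w hw => le_of_eq (h0 w hw).symm)
  have ha := antitoneOn_of_deriv_nonpos (convex_Ioi 0) hc hd
    (fun w hw => le_of_eq (h0 w hw))
  rcases le_total x y with hxy | hxy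
  · exact le_antisymm (hm hx hy hxy) (ha hx hy hxy)
  · exact (le_antisymm (hm hy hx hxy) (ha hy hx hxy)).symm

lemma hasDerivAt_E {z : ℝ} (hz : 0 < z) :
    HasDerivAt (fun z : ℝ => Real.exp (-(1 / (2 * z))))
      (Real.exp (-(1 / (2 * z))) * (1 / (2 * z ^ 2))) z := by
  have h2 : HasDerivAt (fun z : ℝ => 2 * z) 2 z := by
    simpa using (hasDerivAt_id z).const_mul 2
  have h3 : HasDerivAt (fun z : ℝ => -(1 / (2 * z))) (1 / (2 * z ^ 2)) z := by
    have := (h2.inv (by positivity)).neg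
    simp only [one_div]
    refine this.congr_deriv ?_
    field_simp
  simpa [mul_comm] using h3.exp

lemma hasDerivAt_Ttail {z : ℝ} (hz : 0 < z) :
    HasDerivAt Ttail (-2 + (2 + 1 / z) * Real.exp (-(1 / (2 * z)))) z := by
  have hE := hasDerivAt_E hz
  have h2 : HasDerivAt (fun z : ℝ => 2 * z) 2 z := by
    simpa using (hasDerivAt_id z).const_mul 2
  have h3 : HasDerivAt (fun z : ℝ => 1 - Real.exp (-(1 / (2 * z))))
      (-(Real.exp (-(1 / (2 * z))) * (1 / (2 * z ^ 2)))) z :=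
    (hasDerivAt_const z (1:ℝ)).sub hE |>.congr_deriv (by ring)
  have h4 := h2.mul h3
  have h5 := (hasDerivAt_const z (1:ℝ)).sub h4
  show HasDerivAt (fun z : ℝ => 1 - 2 * z * (1 - Real.exp (-(1 / (2 * z))))) _ z
  refine h5.congr_deriv ?_
  field_simp
  ring

lemma deriv_Ttail {z : ℝ} (hz : 0 < z) :
    deriv Ttail z = -2 + (2 + 1 / z) * Real.exp (-(1 / (2 * z))) :=
  (hasDerivAt_Ttail hz).deriv

lemma hasDerivAt_F {z : ℝ} (hz : 0 < z) :
    HasDerivAt (fun z : ℝ => -2 + (2 + 1 / z) * Real.exp (-(1 / (2 * z))))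
      (Real.exp (-(1 / (2 * z))) * (1 / (2 * z ^ 3))) z := by
  have hE := hasDerivAt_E hz
  have h1 : HasDerivAt (fun z : ℝ => 2 + 1 / z) (-(1 / z ^ 2)) z := by
    have := (hasDerivAt_const z (2:ℝ)).add ((hasDerivAt_id z).inv hz.ne')
    simp only [one_div]
    refine this.congr_deriv ?_
    simp only [id, zero_add]
    field_simp
  have h2 := (hasDerivAt_const z (-2:ℝ)).add (h1.mul hE)
  refine h2.congr_deriv ?_
  field_simp
  ring

lemma hasDerivAt_deriv_Ttail {z : ℝ} (hz : 0 < z) :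
    HasDerivAt (deriv Ttail) (Real.exp (-(1 / (2 * z))) * (1 / (2 * z ^ 3))) z := by
  apply (hasDerivAt_F hz).congr_of_eventuallyEq
  filter_upwards [isOpen_Ioi.mem_nhds hz] with w hw
  exact deriv_Ttail hw

theorem stmt18 :
    (∀ z : ℝ, 0 < z → DifferentiableAt ℝ Ttail z ∧ DifferentiableAt ℝ (deriv Ttail) z) ∧
    (∀ z : ℝ, 0 < z →
      2 * z ^ 2 * deriv (deriv Ttail) z + (2 * z - 1) * deriv Ttail z - 2 * Ttail z = 0) ∧
    Filter.Tendsto Ttail (nhdsWithin 0 (Ioi 0)) (nhds 1) ∧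
    Filter.Tendsto Ttail Filter.atTop (nhds 0) ∧
    (∀ z : ℝ, 0 < z → -deriv Ttail z = 2 - (1 / z + 2) * Real.exp (-(1 / (2 * z)))) ∧
    ∀ h : ℝ → ℝ,
      (∀ z : ℝ, 0 < z → DifferentiableAt ℝ h z ∧ DifferentiableAt ℝ (deriv h) z) →
      (∀ z : ℝ, 0 < z →
        2 * z ^ 2 * deriv (deriv h) z + (2 * z - 1) * deriv h z - 2 * h z = 0) →
      ∃ c₁ c₂ : ℝ, ∀ z : ℝ, 0 < z →
        h z = c₁ * z * Real.exp (-(1 / (2 * z))) + c₂ * (2 * z - 1) := by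
  refine ⟨?_, ?_, ?_, ?_, ?_, ?_⟩
  · intro z hz
    exact ⟨(hasDerivAt_Ttail hz).differentiableAt, (hasDerivAt_deriv_Ttail hz).differentiableAt⟩
  · intro z hz
    rw [(hasDerivAt_deriv_Ttail hz).deriv, deriv_Ttail hz]
    unfold Ttail
    field_simp
    ring
  · -- limit at 0+
    have hg : Tendsto (fun z : ℝ => 2 * z * (1 - Real.exp (-(1 / (2 * z)))))
        (nhdsWithin 0 (Ioi 0)) (nhds 0) := by
      apply squeeze_zero' (g := fun z : ℝ => 2 * z)
      · filter_upwards [self_mem_nhdsWithin] with z hz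
        have hz' : (0:ℝ) < z := hz
        have hle : -(1 / (2 * z)) ≤ 0 := by
          have : (0:ℝ) < 1 / (2 * z) := by positivity
          linarith
        have : Real.exp (-(1 / (2 * z))) ≤ 1 := by
          have := Real.exp_le_exp.2 hle
          rwa [Real.exp_zero] at this
        nlinarith
      · filter_upwards [self_mem_nhdsWithin] with z hz
        have hz' : (0:ℝ) < z := hz
        have : (0:ℝ) < Real.exp (-(1 / (2 * z))) := Real.exp_pos _
        nlinarith
      · exact (((continuous_const.mul continuous_id : Continuous fun z : ℝ => 2 * z)).tendsto' 0 0 (by norm_num)).mono_left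
          nhdsWithin_le_nhds
    have hT := tendsto_const_nhds (x := (1:ℝ)) (f := nhdsWithin (0:ℝ) (Ioi 0)) |>.sub hg
    rw [show (1:ℝ) - 0 = 1 by norm_num] at hT
    exact hT
  · -- limit at ∞
    have hf : HasDerivAt (fun t : ℝ => 1 - Real.exp (-t)) 1 0 := by
      have := ((hasDerivAt_id (0:ℝ)).neg.exp)
      have h2 := (hasDerivAt_const (0:ℝ) (1:ℝ)).sub this
      exact h2.congr_deriv (by simp)
    have hslope := hasDerivAt_iff_tendsto_slope.mp hf
    have hu : Tendsto (fun z : ℝ => 1 / (2 * z)) atTop (nhdsWithin 0 {(0:ℝ)}ᶜ) := by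
      rw [tendsto_nhdsWithin_iff]
      constructor
      · simp only [one_div]
        apply Tendsto.inv_tendsto_atTop
        exact tendsto_atTop_mono (fun z => le_refl _) (tendsto_id.const_mul_atTop two_pos)
      · filter_upwards [eventually_gt_atTop (0:ℝ)] with z hz
        simp only [mem_compl_iff, mem_singleton_iff]
        positivity
    have hcomp := hslope.comp hu
    have : Tendsto Ttail atTop (nhds (1 - 1)) := by
      apply Tendsto.congr' _ (tendsto_const_nhds.sub hcomp)
      filter_upwards [eventually_gt_atTop (0:ℝ)] with z hz
      unfold Ttail
      simp only [Function.comp_apply, slope_def_field, neg_zero, Real.exp_zero]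
      field_simp
      ring
    simpa using this
  · intro z hz
    rw [deriv_Ttail hz]; ring
  · -- part (d)
    intro h hdiff hODE
    set C1 : ℝ → ℝ := fun z => (2 * h z - (2 * z - 1) * deriv h z) * (2 * z) * Real.exp (1 / (2 * z)) with hC1def
    set C2 : ℝ → ℝ := fun z => 2 * z ^ 2 * deriv h z - (2 * z + 1) * h z with hC2def
    have key : ∀ z : ℝ, 0 < z →
        2 * z ^ 2 * deriv (deriv h) z = 2 * h z - (2 * z - 1) * deriv h z := by
      intro z hz; linarith [hODE z hz]
    have hC2' : ∀ z : ℝ, 0 < z → HasDerivAt C2 0 z := by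
      intro z hz
      have hh' : HasDerivAt h (deriv h z) z := (hdiff z hz).1.hasDerivAt
      have hh'' : HasDerivAt (deriv h) (deriv (deriv h) z) z := (hdiff z hz).2.hasDerivAt
      have hp : HasDerivAt (fun z : ℝ => 2 * z ^ 2) (4 * z) z := by
        have := (hasDerivAt_pow 2 z).const_mul (2:ℝ)
        refine this.congr_deriv ?_
        norm_num
        ring
      have hq : HasDerivAt (fun z : ℝ => 2 * z + 1) 2 z := by
        simpa using ((hasDerivAt_id z).const_mul 2).add_const 1
      have := (hp.mul hh'').sub (hq.mul hh')
      refine this.congr_deriv ?_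
      have := key z hz
      linarith
    have hC1' : ∀ z : ℝ, 0 < z → HasDerivAt C1 0 z := by
      intro z hz
      have hz' : z ≠ 0 := hz.ne'
      have hh' : HasDerivAt h (deriv h z) z := (hdiff z hz).1.hasDerivAt
      have hh'' : HasDerivAt (deriv h) (deriv (deriv h) z) z := (hdiff z hz).2.hasDerivAt
      have hq : HasDerivAt (fun z : ℝ => 2 * z - 1) 2 z := by
        simpa using ((hasDerivAt_id z).const_mul 2).sub_const 1
      have hP : HasDerivAt (fun z : ℝ => 2 * h z - (2 * z - 1) * deriv h z)
          (2 * deriv h z - (2 * deriv h z + (2 * z - 1) * deriv (deriv h) z)) z :=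
        (hh'.const_mul 2).sub (hq.mul hh'')
      have hE2 : HasDerivAt (fun z : ℝ => Real.exp (1 / (2 * z)))
          (Real.exp (1 / (2 * z)) * (-(1 / (2 * z ^ 2)))) z := by
        have h2 : HasDerivAt (fun z : ℝ => 2 * z) 2 z := by
          simpa using (hasDerivAt_id z).const_mul 2
        have h3 : HasDerivAt (fun z : ℝ => 1 / (2 * z)) (-(1 / (2 * z ^ 2))) z := by
          have := h2.inv (by positivity)
          simp only [one_div]
          refine this.congr_deriv ?_
          field_simp
        simpa [mul_comm] using h3.exp
      have hQ : HasDerivAt (fun z : ℝ => 2 * z * Real.exp (1 / (2 * z)))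
          (2 * Real.exp (1 / (2 * z)) + 2 * z * (Real.exp (1 / (2 * z)) * (-(1 / (2 * z ^ 2))))) z := by
        have h2 : HasDerivAt (fun z : ℝ => 2 * z) 2 z := by
          simpa using (hasDerivAt_id z).const_mul 2
        exact h2.mul hE2
      have hmul := hP.mul hQ
      have h0 : (2 * deriv h z - (2 * deriv h z + (2 * z - 1) * deriv (deriv h) z)) *
            (2 * z * Real.exp (1 / (2 * z))) +
          (2 * h z - (2 * z - 1) * deriv h z) *
            (2 * Real.exp (1 / (2 * z)) + 2 * z * (Real.exp (1 / (2 * z)) * (-(1 / (2 * z ^ 2))))) = 0 := by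
        have hk := key z hz
        field_simp
        linear_combination (-(Real.exp (1 / (2 * z))) * (2 * z - 1)) * hk
      have : HasDerivAt (fun z : ℝ => (2 * h z - (2 * z - 1) * deriv h z) * (2 * z * Real.exp (1 / (2 * z)))) 0 z := h0 ▸ hmul
      simpa [hC1def, mul_assoc] using this
    refine ⟨C1 1, C2 1, fun z hz => ?_⟩
    have e1 : C1 z = C1 1 := const_on_Ioi hC1' hz one_pos
    have e2 : C2 z = C2 1 := const_on_Ioi hC2' hz one_pos
    rw [← e1, ← e2]
    have hexp : Real.exp (1 / (2 * z)) * Real.exp (-(1 / (2 * z))) = 1 := by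
      rw [← Real.exp_add]; ring_nf; exact Real.exp_zero
    simp only [hC1def, hC2def]
    linear_combination (-(2 * h z - (2 * z - 1) * deriv h z) * 2 * z * z) * hexp

end
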